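/- Let p be an odd prime with p ∉ {7, 13}, and let S = x_1,…,x_m be a sequence over Z/pZ such that at least three terms of S are units in Z/pZ. Then there exist a_1,…,a_m ∈ T_p such that a_1 x_1 + … + a_m x_m ≡ 0 (mod p). -/

import Mathlib

open Finset

open scoped Classical

/-- `Tset n` is the set of cubes of units in `ZMod n`. -/
def Tset (n : ℕ) : Set (ZMod n) := {x | ∃ u : (ZMod n)ˣ, ((u : ZMod n)) ^ 3 = x}

/-- A family `x : ι → ZMod n` has a nonempty `A`-weighted zero-sum subsequence. -/
def HasWZS {n : ℕ} {ι : Type} (A : Set (ZMod n)) (x : ι → ZMod n) : Prop :=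
  ∃ I : Finset ι, I.Nonempty ∧ ∃ a : ι → ZMod n, (∀ i ∈ I, a i ∈ A) ∧ ∑ i ∈ I, a i * x i = 0

/-- The weighted Davenport constant `D_A(ZMod n)`. -/
noncomputable def DavA (n : ℕ) (A : Set (ZMod n)) : ℕ :=
  sInf {ℓ : ℕ | 0 < ℓ ∧ ∀ x : Fin ℓ → ZMod n, HasWZS A x}

/-- A family has an `A`-weighted zero-sum subsequence of length exactly `m`. -/
def HasWZSLen {n : ℕ} {ι : Type} (A : Set (ZMod n)) (x : ι → ZMod n) (m : ℕ) : Prop :=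
  ∃ I : Finset ι, I.card = m ∧ ∃ a : ι → ZMod n, (∀ i ∈ I, a i ∈ A) ∧ ∑ i ∈ I, a i * x i = 0

/-- The constant `E_A(ZMod n)`. -/
noncomputable def EA (n : ℕ) (A : Set (ZMod n)) : ℕ :=
  sInf {ℓ : ℕ | 0 < ℓ ∧ ∀ x : Fin ℓ → ZMod n, HasWZSLen A x n}

/-- An `A`-extremal sequence: length `D_A - 1` with no nonempty `A`-weighted zero-sum
subsequence. -/
def IsExtremal {n : ℕ} {ι : Type} [Fintype ι] (A : Set (ZMod n)) (x : ι → ZMod n) : Prop :=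
  Fintype.card ι + 1 = DavA n A ∧ ¬ HasWZS A x

/-- `Omega n` is the number of prime factors of `n` counted with multiplicity. -/
def Omega (n : ℕ) : ℕ := n.primeFactorsList.length


section AuxLemmas

lemma abs_of_cubic {z : ℂ} (hz : z ^ 3 = 1) : ‖z‖ = 1 := by
  have h : ‖z‖ ^ 3 = 1 := by rw [← norm_pow, hz, norm_one]
  nlinarith [norm_nonneg z, sq_nonneg (‖z‖ - 1), sq_nonneg (‖z‖ + 1)]

lemma geom3 {ω : ℂ} (h : ω ^ 3 = 1) (hne : ω ≠ 1) : 1 + ω + ω ^ 2 = 0 := by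
  have h0 : (ω - 1) * (1 + ω + ω ^ 2) = 0 := by linear_combination h
  rcases mul_eq_zero.mp h0 with h1 | h2
  · exact absurd (by linear_combination h1) hne
  · exact h2

variable {p : ℕ} [Fact p.Prime]

lemma chi_cube_val {χ : MulChar (ZMod p) ℂ} (h3 : χ ^ 3 = 1) {x : ZMod p} (hx : x ≠ 0) :
    (χ x) ^ 3 = 1 := by
  rw [← MulChar.pow_apply' χ (by norm_num) x, h3, MulChar.one_apply hx.isUnit]

lemma cube_of_chi_eq_one {χ : MulChar (ZMod p) ℂ} (hord : orderOf χ = 3) {x : ZMod p}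
    (hx : x ≠ 0) (h1 : χ x = 1) : ∃ u : (ZMod p)ˣ, (u : ZMod p) ^ 3 = x := by
  have h3 : χ ^ 3 = 1 := hord ▸ pow_orderOf_eq_one χ
  obtain ⟨g, hg⟩ := IsCyclic.exists_generator (α := (ZMod p)ˣ)
  have hg0 : ((g : ZMod p)) ≠ 0 := g.ne_zero
  have hg3 : (χ (g : ZMod p)) ^ 3 = 1 := chi_cube_val h3 hg0
  have hpow : ∀ a : (ZMod p)ˣ, ∃ n : ℕ, g ^ n = a := by
    intro a
    have := (isOfFinOrder_of_finite g).mem_powers_iff_mem_zpowers.mpr (hg a)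
    exact (Submonoid.mem_powers_iff a g).mp this
  have hgne : χ (g : ZMod p) ≠ 1 := by
    intro h
    have hχ1 : χ = 1 := by
      apply MulChar.ext
      intro a
      obtain ⟨n, hn⟩ := hpow a
      rw [← hn, MulChar.one_apply_coe, Units.val_pow_eq_pow_val, map_pow, h, one_pow]
    rw [hχ1, orderOf_one] at hord
    norm_num at hord
  have hordg : orderOf (χ (g : ZMod p)) = 3 := by
    rcases Nat.prime_three.eq_one_or_self_of_dvd _ (orderOf_dvd_of_pow_eq_one hg3) with h | h
    · exact absurd (orderOf_eq_one_iff.mp h) hgne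
    · exact h
  obtain ⟨n, hn⟩ := hpow hx.isUnit.unit
  have hxn : (g : ZMod p) ^ n = x := by
    rw [← Units.val_pow_eq_pow_val, hn, IsUnit.unit_spec]
  have hval : (χ (g : ZMod p)) ^ n = 1 := by
    rw [← map_pow, hxn, h1]
  have h3n : 3 ∣ n := hordg ▸ orderOf_dvd_of_pow_eq_one hval
  refine ⟨g ^ (n / 3), ?_⟩
  rw [← Units.val_pow_eq_pow_val, ← pow_mul, Nat.div_mul_cancel h3n,
    Units.val_pow_eq_pow_val, hxn]

lemma chi_of_cube {χ : MulChar (ZMod p) ℂ} (h3 : χ ^ 3 = 1) (u : (ZMod p)ˣ) :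
    χ ((u : ZMod p) ^ 3) = 1 := by
  rw [map_pow, ← MulChar.pow_apply_coe, h3, MulChar.one_apply_coe]

lemma absJ {φ : MulChar (ZMod p) ℂ} (h1 : φ ≠ 1) (hmul : φ * φ ≠ 1) (h3 : φ ^ 3 = 1) :
    ‖jacobiSum φ φ‖ = Real.sqrt p := by
  have hconj : φ.ringHomComp (starRingEnd ℂ) = φ⁻¹ := by
    apply MulChar.ext
    intro a
    rw [MulChar.ringHomComp_apply, MulChar.inv_apply_eq_inv']
    have hz : (φ (a : ZMod p)) ^ 3 = 1 := chi_cube_val h3 a.ne_zero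
    have hn : ‖φ (a : ZMod p)‖ = 1 := by
      exact abs_of_cubic hz
    rw [← Complex.inv_eq_conj hn]
  have hchar : ringChar ℂ ≠ ringChar (ZMod p) := by
    rw [ringChar.eq_zero, ZMod.ringChar_zmod_n]
    exact fun h => (Fact.out : p.Prime).ne_zero h.symm
  have hJ : jacobiSum φ φ * jacobiSum φ⁻¹ φ⁻¹ = (Fintype.card (ZMod p) : ℂ) :=
    jacobiSum_mul_jacobiSum_inv hchar h1 h1 hmul
  have hcJ : (starRingEnd ℂ) (jacobiSum φ φ) = jacobiSum φ⁻¹ φ⁻¹ := by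
    rw [← jacobiSum_ringHomComp, hconj]
  have hns : ((Complex.normSq (jacobiSum φ φ) : ℝ) : ℂ) = ((p : ℝ) : ℂ) := by
    rw [← Complex.mul_conj, hcJ, hJ, ZMod.card]
    norm_num
  have hns' : Complex.normSq (jacobiSum φ φ) = (p : ℝ) := Complex.ofReal_inj.mp hns
  rw [Complex.norm_def, hns']

/-- Cubes are all of the units when `3 ∤ p - 1`. -/
lemma cube_surj (h : ¬ 3 ∣ p - 1) {w : ZMod p} (hw : w ≠ 0) :
    ∃ u : (ZMod p)ˣ, (u : ZMod p) ^ 3 = w := by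
  have hcop : (Nat.card (ZMod p)ˣ).Coprime 3 := by
    rw [Nat.card_eq_fintype_card, ZMod.card_units]
    exact (Nat.prime_three.coprime_iff_not_dvd.mpr h).symm
  obtain ⟨u, hu⟩ := (powCoprime hcop).surjective hw.isUnit.unit
  refine ⟨u, ?_⟩
  have hu' : u ^ 3 = hw.isUnit.unit := hu
  rw [← Units.val_pow_eq_pow_val, hu', IsUnit.unit_spec]

end AuxLemmas

section Key2

variable {p : ℕ} [Fact p.Prime]

lemma key2 (hp17 : 17 ≤ p) (hdvd : 3 ∣ p - 1) {α β : ZMod p} (hα : α ≠ 0) (hβ : β ≠ 0) :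
    ∃ u v : (ZMod p)ˣ, (u : ZMod p) ^ 3 * α + (v : ZMod p) ^ 3 * β = 1 := by
  by_contra hno
  push_neg at hno
  -- a multiplicative character of order 3
  have hζ : IsPrimitiveRoot (Complex.exp (2 * Real.pi * Complex.I / 3)) 3 :=
    Complex.isPrimitiveRoot_exp 3 (by norm_num)
  have hcard3 : (3 : ℕ) ∣ Fintype.card (ZMod p) - 1 := by rwa [ZMod.card]
  obtain ⟨χ, hord⟩ := MulChar.exists_mulChar_orderOf (ZMod p) hcard3 hζ
  have h3 : χ ^ 3 = 1 := hord ▸ pow_orderOf_eq_one χ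
  have hχ1 : χ ≠ 1 := by
    intro h; rw [h, orderOf_one] at hord; norm_num at hord
  have hχ2 : χ ^ 2 ≠ 1 := by
    intro h
    have := orderOf_dvd_of_pow_eq_one h
    rw [hord] at this
    norm_num at this
  have hχχ : χ * χ ≠ 1 := by rwa [← pow_two]
  have hχ2inv : χ ^ 2 = χ⁻¹ := by
    apply eq_inv_of_mul_eq_one_left
    rw [← pow_succ, h3]
  have hα' : α⁻¹ ≠ 0 := inv_ne_zero hα
  have hβ' : β⁻¹ ≠ 0 := inv_ne_zero hβ
  -- each term of the big sum vanishes
  have hzero : ∀ s : ZMod p,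
      (∑ j ∈ Finset.range 3, χ α⁻¹ ^ j * (χ ^ j) s) *
        (∑ k ∈ Finset.range 3, χ β⁻¹ ^ k * (χ ^ k) (1 - s)) = 0 := by
    intro s
    rcases eq_or_ne s 0 with rfl | hs
    · rw [Finset.sum_eq_zero, zero_mul]
      intro j _
      rcases Nat.eq_zero_or_pos j with rfl | hj
      · rw [pow_zero, MulChar.map_zero, mul_zero]
      · rw [MulChar.map_zero, mul_zero]
    rcases eq_or_ne s 1 with rfl | hs1
    · rw [mul_comm, Finset.sum_eq_zero, zero_mul]
      intro k _
      rcases Nat.eq_zero_or_pos k with rfl | hk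
      · rw [pow_zero, sub_self, MulChar.map_zero, mul_zero]
      · rw [sub_self, MulChar.map_zero, mul_zero]
    have hs1' : (1 : ZMod p) - s ≠ 0 := sub_ne_zero.mpr (Ne.symm hs1)
    have conv : ∀ (γ w : ZMod p), γ ≠ 0 → w ≠ 0 →
        (∑ j ∈ Finset.range 3, χ γ ^ j * (χ ^ j) w) = ∑ j ∈ Finset.range 3, χ (γ * w) ^ j := by
      intro γ w hγ hw
      refine Finset.sum_congr rfl fun j _ => ?_
      rcases Nat.eq_zero_or_pos j with rfl | hj
      · rw [pow_zero, pow_zero, pow_zero, one_mul, MulChar.one_apply hw.isUnit]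
      · rw [MulChar.pow_apply' χ hj.ne' w, map_mul, mul_pow]
    rw [conv α⁻¹ s hα' hs, conv β⁻¹ (1 - s) hβ' hs1']
    have hgeom : ∀ (w : ZMod p), w ≠ 0 → χ w ≠ 1 →
        (∑ j ∈ Finset.range 3, χ w ^ j) = 0 := by
      intro w hw hne
      have := geom3 (chi_cube_val h3 hw) hne
      simp only [Finset.sum_range_succ, Finset.sum_range_zero, zero_add, pow_zero, pow_one]
      linear_combination this
    rcases eq_or_ne (χ (α⁻¹ * s)) 1 with h1 | h1
    · rcases eq_or_ne (χ (β⁻¹ * (1 - s))) 1 with h2 | h2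
      · exfalso
        obtain ⟨u, hu⟩ := cube_of_chi_eq_one hord (mul_ne_zero hα' hs) h1
        obtain ⟨v, hv⟩ := cube_of_chi_eq_one hord (mul_ne_zero hβ' hs1') h2
        refine hno u v ?_
        have h1' : (u : ZMod p) ^ 3 * α = s := by
          rw [hu]; field_simp
        have h2' : (v : ZMod p) ^ 3 * β = 1 - s := by
          rw [hv]; field_simp
        rw [h1', h2']
        ring
      · rw [hgeom _ (mul_ne_zero hβ' hs1') h2, mul_zero]
    · rw [hgeom _ (mul_ne_zero hα' hs) h1, zero_mul]
  -- rewrite the big sum via Jacobi sums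
  have hsum : (0 : ℂ) = ∑ j ∈ Finset.range 3, ∑ k ∈ Finset.range 3,
      χ α⁻¹ ^ j * χ β⁻¹ ^ k * jacobiSum (χ ^ j) (χ ^ k) := by
    have lhs0 : (0 : ℂ) = ∑ s : ZMod p,
        (∑ j ∈ Finset.range 3, χ α⁻¹ ^ j * (χ ^ j) s) *
          (∑ k ∈ Finset.range 3, χ β⁻¹ ^ k * (χ ^ k) (1 - s)) :=
      (Finset.sum_eq_zero fun s _ => hzero s).symm
    rw [lhs0]
    calc ∑ s : ZMod p, (∑ j ∈ Finset.range 3, χ α⁻¹ ^ j * (χ ^ j) s) *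
          (∑ k ∈ Finset.range 3, χ β⁻¹ ^ k * (χ ^ k) (1 - s))
        = ∑ s : ZMod p, ∑ j ∈ Finset.range 3, ∑ k ∈ Finset.range 3,
            χ α⁻¹ ^ j * χ β⁻¹ ^ k * ((χ ^ j) s * (χ ^ k) (1 - s)) := by
          refine Finset.sum_congr rfl fun s _ => ?_
          rw [Finset.sum_mul_sum]
          exact Finset.sum_congr rfl fun j _ => Finset.sum_congr rfl fun k _ => by ring
      _ = ∑ j ∈ Finset.range 3, ∑ k ∈ Finset.range 3,
            χ α⁻¹ ^ j * χ β⁻¹ ^ k * jacobiSum (χ ^ j) (χ ^ k) := by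
          rw [Finset.sum_comm]
          refine Finset.sum_congr rfl fun j _ => ?_
          rw [Finset.sum_comm]
          refine Finset.sum_congr rfl fun k _ => ?_
          rw [← Finset.mul_sum]
          rfl
  -- values of the individual Jacobi sums
  have hJ00 : jacobiSum (χ ^ 0) (χ ^ 0) = (p : ℂ) - 2 := by
    rw [pow_zero, jacobiSum_one_one, ZMod.card]
  have hJ01 : jacobiSum (χ ^ 0) (χ ^ 1) = -1 := by
    rw [pow_zero, pow_one]; exact jacobiSum_one_nontrivial hχ1
  have hJ10 : jacobiSum (χ ^ 1) (χ ^ 0) = -1 := by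
    rw [jacobiSum_comm]; exact hJ01
  have hJ02 : jacobiSum (χ ^ 0) (χ ^ 2) = -1 := by
    rw [pow_zero]; exact jacobiSum_one_nontrivial hχ2
  have hJ20 : jacobiSum (χ ^ 2) (χ ^ 0) = -1 := by
    rw [jacobiSum_comm]; exact hJ02
  have hJ12 : jacobiSum (χ ^ 1) (χ ^ 2) = -(χ (-1)) := by
    rw [pow_one, hχ2inv]; exact jacobiSum_nontrivial_inv hχ1
  have hJ21 : jacobiSum (χ ^ 2) (χ ^ 1) = -((χ ^ 2) (-1)) := by
    have hinv : (χ ^ 2)⁻¹ = χ := by rw [hχ2inv, inv_inv]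
    calc jacobiSum (χ ^ 2) (χ ^ 1) = jacobiSum (χ ^ 2) ((χ ^ 2)⁻¹) := by rw [pow_one, hinv]
      _ = -((χ ^ 2) (-1)) := jacobiSum_nontrivial_inv hχ2
  have habsJ11 : ‖jacobiSum χ χ‖ = Real.sqrt p := absJ hχ1 hχχ h3
  have habsJ22 : ‖jacobiSum (χ ^ 2) (χ ^ 2)‖ = Real.sqrt p := by
    refine absJ hχ2 ?_ ?_
    · have h4 : χ ^ 2 * χ ^ 2 = χ := by
        rw [← pow_add]
        show χ ^ (3 + 1) = χ
        rw [pow_succ, h3, one_mul]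
      rw [h4]; exact hχ1
    · have h6 : (χ ^ 2) ^ 3 = (χ ^ 3) ^ 2 := by
        rw [← pow_mul, ← pow_mul]
      rw [h6, h3, one_pow]
  -- absolute values of character values
  have habs : ∀ {w : ZMod p}, w ≠ 0 → ‖χ w‖ = 1 := fun hw =>
    abs_of_cubic (chi_cube_val h3 hw)
  have hA : ‖χ α⁻¹‖ = 1 := habs hα'
  have hB : ‖χ β⁻¹‖ = 1 := habs hβ'
  have hm1 : (-1 : ZMod p) ≠ 0 := by
    intro h
    have : (1 : ZMod p) = 0 := by linear_combination -h
    exact one_ne_zero this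
  have hM : ‖χ (-1)‖ = 1 := habs hm1
  have hM2 : ‖(χ ^ 2) (-1)‖ = 1 := by
    rw [MulChar.pow_apply' χ (by norm_num) (-1), norm_pow, hM, one_pow]
  -- expand the double sum
  simp only [Finset.sum_range_succ, Finset.sum_range_zero, zero_add] at hsum
  rw [hJ00, hJ01, hJ02, hJ10, hJ12, hJ20, hJ21] at hsum
  -- isolate p - 2
  have hiso : (p : ℂ) - 2 =
      -(χ α⁻¹ ^ 0 * χ β⁻¹ ^ 1 * (-1) + χ α⁻¹ ^ 0 * χ β⁻¹ ^ 2 * (-1)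
        + χ α⁻¹ ^ 1 * χ β⁻¹ ^ 0 * (-1)
        + χ α⁻¹ ^ 1 * χ β⁻¹ ^ 1 * jacobiSum (χ ^ 1) (χ ^ 1)
        + χ α⁻¹ ^ 1 * χ β⁻¹ ^ 2 * (-(χ (-1)))
        + χ α⁻¹ ^ 2 * χ β⁻¹ ^ 0 * (-1)
        + χ α⁻¹ ^ 2 * χ β⁻¹ ^ 1 * (-((χ ^ 2) (-1)))
        + χ α⁻¹ ^ 2 * χ β⁻¹ ^ 2 * jacobiSum (χ ^ 2) (χ ^ 2)) := by
    linear_combination -hsum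
  have tri : ∀ u v : ℂ, ‖u + v‖ ≤ ‖u‖ + ‖v‖ :=
    fun u v => norm_add_le u v
  -- bound each term
  have e1 : ‖χ α⁻¹ ^ 0 * χ β⁻¹ ^ 1 * (-1)‖ = 1 := by
    simp [map_mul, map_pow, hA, hB]
  have e2 : ‖χ α⁻¹ ^ 0 * χ β⁻¹ ^ 2 * (-1)‖ = 1 := by
    simp [map_mul, map_pow, hA, hB]
  have e3 : ‖χ α⁻¹ ^ 1 * χ β⁻¹ ^ 0 * (-1)‖ = 1 := by
    simp [map_mul, map_pow, hA, hB]
  have e4 : ‖χ α⁻¹ ^ 1 * χ β⁻¹ ^ 1 * jacobiSum (χ ^ 1) (χ ^ 1)‖ = Real.sqrt p := by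
    simp [map_mul, map_pow, hA, hB, habsJ11]
  have e5 : ‖χ α⁻¹ ^ 1 * χ β⁻¹ ^ 2 * (-(χ (-1)))‖ = 1 := by
    simp [map_mul, map_pow, hA, hB, hM]
  have e6 : ‖χ α⁻¹ ^ 2 * χ β⁻¹ ^ 0 * (-1)‖ = 1 := by
    simp [map_mul, map_pow, hA, hB]
  have e7 : ‖χ α⁻¹ ^ 2 * χ β⁻¹ ^ 1 * (-((χ ^ 2) (-1)))‖ = 1 := by
    simp [map_mul, map_pow, hA, hB, hM2]
  have e8 : ‖χ α⁻¹ ^ 2 * χ β⁻¹ ^ 2 * jacobiSum (χ ^ 2) (χ ^ 2)‖ = Real.sqrt p := by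
    simp [map_mul, map_pow, hA, hB, habsJ22]
  set t1 := χ α⁻¹ ^ 0 * χ β⁻¹ ^ 1 * (-1 : ℂ)
  set t2 := χ α⁻¹ ^ 0 * χ β⁻¹ ^ 2 * (-1 : ℂ)
  set t3 := χ α⁻¹ ^ 1 * χ β⁻¹ ^ 0 * (-1 : ℂ)
  set t4 := χ α⁻¹ ^ 1 * χ β⁻¹ ^ 1 * jacobiSum (χ ^ 1) (χ ^ 1)
  set t5 := χ α⁻¹ ^ 1 * χ β⁻¹ ^ 2 * (-(χ (-1)))
  set t6 := χ α⁻¹ ^ 2 * χ β⁻¹ ^ 0 * (-1 : ℂ)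
  set t7 := χ α⁻¹ ^ 2 * χ β⁻¹ ^ 1 * (-((χ ^ 2) (-1)))
  set t8 := χ α⁻¹ ^ 2 * χ β⁻¹ ^ 2 * jacobiSum (χ ^ 2) (χ ^ 2)
  have hbound : ‖(p : ℂ) - 2‖ ≤ 6 + 2 * Real.sqrt p := by
    rw [hiso, norm_neg]
    calc ‖t1 + t2 + t3 + t4 + t5 + t6 + t7 + t8‖
        ≤ ‖t1 + t2 + t3 + t4 + t5 + t6 + t7‖ + ‖t8‖ := tri _ _
      _ ≤ (‖t1 + t2 + t3 + t4 + t5 + t6‖ + ‖t7‖) + ‖t8‖ := by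
          gcongr; exact tri _ _
      _ ≤ ((‖t1 + t2 + t3 + t4 + t5‖ + ‖t6‖) + ‖t7‖)
            + ‖t8‖ := by gcongr; exact tri _ _
      _ ≤ (((‖t1 + t2 + t3 + t4‖ + ‖t5‖) + ‖t6‖)
            + ‖t7‖) + ‖t8‖ := by gcongr; exact tri _ _
      _ ≤ ((((‖t1 + t2 + t3‖ + ‖t4‖) + ‖t5‖) + ‖t6‖)
            + ‖t7‖) + ‖t8‖ := by gcongr; exact tri _ _
      _ ≤ (((((‖t1 + t2‖ + ‖t3‖) + ‖t4‖) + ‖t5‖)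
            + ‖t6‖) + ‖t7‖) + ‖t8‖ := by gcongr; exact tri _ _
      _ ≤ ((((((‖t1‖ + ‖t2‖) + ‖t3‖) + ‖t4‖)
            + ‖t5‖) + ‖t6‖) + ‖t7‖) + ‖t8‖ := by
          gcongr; exact tri _ _
      _ = 6 + 2 * Real.sqrt p := by
          rw [e1, e2, e3, e4, e5, e6, e7, e8]; ring
  -- derive the contradiction
  have hpR : (17 : ℝ) ≤ (p : ℝ) := by exact_mod_cast hp17
  have habsL : ‖(p : ℂ) - 2‖ = (p : ℝ) - 2 := by
    have : ((p : ℂ) - 2) = (((p : ℝ) - 2 : ℝ) : ℂ) := by push_cast; ring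
    rw [this, Complex.norm_real, Real.norm_eq_abs, abs_of_nonneg (by linarith)]
  rw [habsL] at hbound
  have hsq : Real.sqrt p ^ 2 = (p : ℝ) := Real.sq_sqrt (by positivity)
  nlinarith [Real.sqrt_nonneg p, sq_nonneg (Real.sqrt p - 4)]

end Key2

section Key3

variable {p : ℕ} [Fact p.Prime]

lemma key2' (hp17 : 17 ≤ p) (hdvd : 3 ∣ p - 1) {α β t : ZMod p} (hα : α ≠ 0) (hβ : β ≠ 0)
    (ht : t ≠ 0) : ∃ u v : (ZMod p)ˣ, (u : ZMod p) ^ 3 * α + (v : ZMod p) ^ 3 * β = t := by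
  obtain ⟨u, v, huv⟩ := key2 hp17 hdvd (mul_ne_zero hα (inv_ne_zero ht))
    (mul_ne_zero hβ (inv_ne_zero ht))
  refine ⟨u, v, ?_⟩
  have := congrArg (· * t) huv
  field_simp at this ⊢
  linear_combination this

lemma key3 (hodd : Odd p) (h7 : p ≠ 7) (h13 : p ≠ 13) {X Y Z : ZMod p}
    (hX : X ≠ 0) (hY : Y ≠ 0) (hZ : Z ≠ 0) (t : ZMod p) :
    ∃ a b c : (ZMod p)ˣ,
      (a : ZMod p) ^ 3 * X + (b : ZMod p) ^ 3 * Y + (c : ZMod p) ^ 3 * Z = t := by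
  have hp : p.Prime := Fact.out
  by_cases hdvd : 3 ∣ p - 1
  · -- hard case : p ≡ 1 mod 3, so p ≥ 17
    have hp17 : 17 ≤ p := by
      by_contra hlt
      push_neg at hlt
      have h2p : 2 ≤ p := hp.two_le
      interval_cases p <;>
        first
          | exact h7 rfl
          | exact h13 rfl
          | omega
          | (revert hp; norm_num)
    rcases eq_or_ne t Z with rfl | ht
    · -- t = Z : use c with value 8
      have h2 : (2 : ZMod p) ≠ 0 := by
        intro h
        have := (ZMod.natCast_eq_zero_iff 2 p).mp (by exact_mod_cast h)
        have := Nat.le_of_dvd (by norm_num) this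
        omega
      have h7' : (7 : ZMod p) ≠ 0 := by
        intro h
        have := (ZMod.natCast_eq_zero_iff 7 p).mp (by exact_mod_cast h)
        have := Nat.le_of_dvd (by norm_num) this
        omega
      set c : (ZMod p)ˣ := h2.isUnit.unit with hc
      have hcv : (c : ZMod p) = 2 := IsUnit.unit_spec _
      have htarget : t - (c : ZMod p) ^ 3 * t ≠ 0 := by
        rw [hcv]
        intro h
        apply mul_ne_zero h7' hZ
        linear_combination -h
      obtain ⟨u, v, huv⟩ := key2' hp17 hdvd hX hY htarget
      exact ⟨u, v, c, by linear_combination huv⟩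
    · obtain ⟨u, v, huv⟩ := key2' hp17 hdvd hX hY (sub_ne_zero.mpr ht)
      refine ⟨u, v, 1, ?_⟩
      rw [Units.val_one, one_pow, one_mul]
      linear_combination huv
  · -- easy case : every nonzero element is a cube
    have hppos : 2 ≤ p := hp.two_le
    have h1 : (1 : ZMod p) ≠ 0 := one_ne_zero
    have hneg1 : (-1 : ZMod p) ≠ 0 := neg_ne_zero.mpr one_ne_zero
    obtain ⟨U, V, W, hU, hV, hW, hsum⟩ :
        ∃ U V W : ZMod p, U ≠ 0 ∧ V ≠ 0 ∧ W ≠ 0 ∧ U + V + W = t := by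
      rcases eq_or_ne (t - 1) 0 with h | h
      · refine ⟨1, 1, -1, h1, h1, hneg1, ?_⟩
        have ht1 : t = 1 := by linear_combination h
        rw [ht1]; ring
      · have h2 : (2 : ZMod p) ≠ 0 := by
          have : ((2 : ℕ) : ZMod p) ≠ 0 := by
            rw [Ne, ZMod.natCast_eq_zero_iff]
            intro hdvd2
            have hle := Nat.le_of_dvd (by norm_num) hdvd2
            have h2p := hp.two_le
            rcases hodd with ⟨k, hk⟩
            omega
          exact_mod_cast this
        exact ⟨1, -(t - 1), 2 * (t - 1), h1, neg_ne_zero.mpr h, mul_ne_zero h2 h, by ring⟩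
    obtain ⟨a, ha⟩ := cube_surj hdvd (mul_ne_zero hU (inv_ne_zero hX))
    obtain ⟨b, hb⟩ := cube_surj hdvd (mul_ne_zero hV (inv_ne_zero hY))
    obtain ⟨c, hc⟩ := cube_surj hdvd (mul_ne_zero hW (inv_ne_zero hZ))
    refine ⟨a, b, c, ?_⟩
    rw [ha, hb, hc]
    field_simp
    linear_combination hsum

end Key3

theorem stmt7 (p : ℕ) (hp : p.Prime) (hodd : Odd p) (h7 : p ≠ 7) (h13 : p ≠ 13)
    (m : ℕ) (x : Fin m → ZMod p)
    (h3 : 3 ≤ (Finset.univ.filter fun i => IsUnit (x i)).card) :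
    ∃ a : Fin m → ZMod p, (∀ i, a i ∈ Tset p) ∧ ∑ i, a i * x i = 0 := by
  set s : Finset (Fin m) := Finset.univ.filter fun i => IsUnit (x i) with hs
  have h3' : 3 ≤ s.card := h3
  have hmem : ∀ {n : Fin m}, n ∈ s → IsUnit (x n) := by
    intro n hn
    rw [hs] at hn
    exact (Finset.mem_filter.mp hn).2
  haveI : Fact p.Prime := ⟨hp⟩
  obtain ⟨i, hi⟩ := Finset.card_pos.mp (show 0 < s.card by omega)
  obtain ⟨j, hj⟩ := Finset.card_pos.mp (show 0 < (s.erase i).card by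
    rw [Finset.card_erase_of_mem hi]; omega)
  obtain ⟨k, hk⟩ := Finset.card_pos.mp (show 0 < ((s.erase i).erase j).card by
    rw [Finset.card_erase_of_mem hj, Finset.card_erase_of_mem hi]; omega)
  have hji : j ≠ i := (Finset.mem_erase.mp hj).1
  have hkj : k ≠ j := (Finset.mem_erase.mp hk).1
  have hjs : j ∈ s := (Finset.mem_erase.mp hj).2
  have hki : k ≠ i := (Finset.mem_erase.mp (Finset.mem_erase.mp hk).2).1
  have hks : k ∈ s := (Finset.mem_erase.mp (Finset.mem_erase.mp hk).2).2
  have hxi : x i ≠ 0 := (hmem hi).ne_zero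
  have hxj : x j ≠ 0 := (hmem hjs).ne_zero
  have hxk : x k ≠ 0 := (hmem hks).ne_zero
  set I : Finset (Fin m) := {i, j, k} with hI
  obtain ⟨A, B, C, hABC⟩ := key3 hodd h7 h13 hxi hxj hxk (-(∑ n ∈ Finset.univ \ I, x n))
  set a : Fin m → ZMod p := fun n =>
    if n = i then (A : ZMod p) ^ 3 else if n = j then (B : ZMod p) ^ 3
      else if n = k then (C : ZMod p) ^ 3 else 1 with ha
  refine ⟨a, ?_, ?_⟩
  · intro n
    simp only [ha]
    split_ifs
    · exact ⟨A, rfl⟩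
    · exact ⟨B, rfl⟩
    · exact ⟨C, rfl⟩
    · exact ⟨1, by norm_num⟩
  · rw [← Finset.sum_sdiff (Finset.subset_univ I)]
    have hij : i ∉ ({j, k} : Finset (Fin m)) := by
      simp [Finset.mem_insert, Ne.symm hji, Ne.symm hki]
    have hjk : j ∉ ({k} : Finset (Fin m)) := by simp [Ne.symm hkj]
    have h1 : ∑ n ∈ I, a n * x n =
        (A : ZMod p) ^ 3 * x i + (B : ZMod p) ^ 3 * x j + (C : ZMod p) ^ 3 * x k := by
      rw [hI, Finset.sum_insert hij, Finset.sum_insert hjk, Finset.sum_singleton]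
      simp [ha, hji, hkj, hki]
      try ring
    have h2 : ∑ n ∈ Finset.univ \ I, a n * x n = ∑ n ∈ Finset.univ \ I, x n := by
      refine Finset.sum_congr rfl fun n hn => ?_
      have hn' := (Finset.mem_sdiff.mp hn).2
      rw [hI] at hn'
      simp only [Finset.mem_insert, Finset.mem_singleton, not_or] at hn'
      simp only [ha, if_neg hn'.1, if_neg hn'.2.1, if_neg hn'.2.2, one_mul]
    rw [h1, h2]
    linear_combination hABC
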